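/- arXiv:1908.00674 — 7 statements merged into one kernel-verified Lean document; each statement's English description precedes it below -/
import Mathlib

section
/- For every graph G, the b-chromatic number of G is at most m(G), where m(G) is the largest integer k such that G has at least k vertices of degree at least k-1. -/
open SimpleGraph

variable {V : Type*}

/-- A proper coloring of `G` using exactly the colors `0, …, k-1`. -/
def IsProperKColoring (G : SimpleGraph V) (k : ℕ) (c : V → ℕ) : Prop :=
  (∀ v, c v < k) ∧ (∀ u v, G.Adj u v → c u ≠ c v) ∧ ∀ i < k, ∃ v, c v = i

/-- `u` is a b-vertex: it has a neighbor in every color class other than its own. -/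
def IsBVertex (G : SimpleGraph V) (k : ℕ) (c : V → ℕ) (u : V) : Prop :=
  ∀ j < k, j ≠ c u → ∃ w, G.Adj u w ∧ c w = j

/-- A b-coloring of `G` with `k` colors: a proper coloring using exactly `k` colors
in which every color class contains a b-vertex. -/
def IsBColoring (G : SimpleGraph V) (k : ℕ) (c : V → ℕ) : Prop :=
  IsProperKColoring G k c ∧ ∀ i < k, ∃ u, c u = i ∧ IsBVertex G k c u

/-- The b-chromatic number: the largest `k` for which `G` has a b-coloring with `k` colors. -/
noncomputable def bChrom [Fintype V] (G : SimpleGraph V) : ℕ :=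
  sSup {k | ∃ c : V → ℕ, IsBColoring G k c}
/-- The upper bound `m(G)`: the largest `k` such that `G` has at least `k` vertices of
degree at least `k - 1`. -/
noncomputable def mBound [Fintype V] (G : SimpleGraph V) [DecidableRel G.Adj] : ℕ :=
  sSup {k | ∃ S : Finset V, k ≤ S.card ∧ ∀ v ∈ S, k - 1 ≤ G.degree v}

/-- For every graph `G`, `b(G) ≤ m(G)`. -/
theorem bChrom_le_mBound [Fintype V] (G : SimpleGraph V) [DecidableRel G.Adj] :
    bChrom G ≤ mBound G := by
  apply csSup_le'
  rintro k ⟨c, ⟨hlt, hadj, -⟩, hb⟩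
  apply le_csSup
  · exact ⟨Fintype.card V, fun m ⟨S, hm, _⟩ =>
      hm.trans (Finset.card_univ (α := V) ▸ S.card_le_univ)⟩
  rcases Nat.eq_zero_or_pos k with rfl | hk
  · exact ⟨∅, by simp⟩
  obtain ⟨u0, -, -⟩ := hb 0 hk
  haveI : Inhabited V := ⟨u0⟩
  classical
  set f : ℕ → V := fun i => if h : i < k then (hb i h).choose else default with hf
  have hcf : ∀ i, i < k → c (f i) = i ∧ IsBVertex G k c (f i) := by
    intro i hi
    simp only [hf, dif_pos hi]
    exact (hb i hi).choose_spec
  refine ⟨(Finset.range k).image f, ?_, ?_⟩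
  · rw [Finset.card_image_of_injOn]
    · simp
    · intro i hi j hj hij
      rw [Finset.mem_coe, Finset.mem_range] at hi hj
      rw [← (hcf i hi).1, ← (hcf j hj).1, hij]
  · intro v hv
    rw [Finset.mem_image] at hv
    obtain ⟨i, hi, rfl⟩ := hv
    rw [Finset.mem_range] at hi
    obtain ⟨hci, hbv⟩ := hcf i hi
    -- injection from (range k).erase i into neighborFinset
    set g : ℕ → V := fun j =>
      if h : j < k ∧ j ≠ i then (hbv j h.1 (hci.symm ▸ h.2)).choose else default with hg
    have hgspec : ∀ j, j < k → j ≠ i → G.Adj (f i) (g j) ∧ c (g j) = j := by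
      intro j hj hji
      simp only [hg, dif_pos (And.intro hj hji)]
      exact (hbv j hj (hci.symm ▸ hji)).choose_spec
    have hcard : ((Finset.range k).erase i).card ≤ (G.neighborFinset (f i)).card := by
      apply Finset.card_le_card_of_injOn g
      · intro j hj
        rw [Finset.mem_coe, Finset.mem_erase, Finset.mem_range] at hj
        rw [Finset.mem_coe, SimpleGraph.mem_neighborFinset]
        exact (hgspec j hj.2 hj.1).1
      · intro a ha b hbb hab
        rw [Finset.mem_coe, Finset.mem_erase, Finset.mem_range] at ha hbb
        rw [← (hgspec a ha.2 ha.1).2, ← (hgspec b hbb.2 hbb.1).2, hab]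
    rwa [Finset.card_erase_of_mem (Finset.mem_range.mpr hi), Finset.card_range,
      SimpleGraph.card_neighborFinset_eq_degree] at hcard
end

section
/- For every n ≥ 4, the graph obtained from the complete bipartite graph K_{n,n} by deleting the edges of a perfect matching admits a b-coloring with 2 colors and with n colors, but admits no b-coloring with k colors for any integer k with 2 < k < n. -/
open SimpleGraph

variable {V : Type*}

/-- `K_{n,n}` minus a perfect matching: `inl i` is adjacent to `inr j` iff `i ≠ j`. -/
def crown (n : ℕ) : SimpleGraph (Fin n ⊕ Fin n) :=
  SimpleGraph.fromRel (fun a b => ∃ i j : Fin n, i ≠ j ∧ a = Sum.inl i ∧ b = Sum.inr j)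

lemma crown_adj_inl_inr {n : ℕ} {i j : Fin n} :
    (crown n).Adj (Sum.inl i) (Sum.inr j) ↔ i ≠ j := by
  simp [crown, SimpleGraph.fromRel_adj]

lemma crown_adj_inr_inl {n : ℕ} {i j : Fin n} :
    (crown n).Adj (Sum.inr i) (Sum.inl j) ↔ i ≠ j := by
  rw [SimpleGraph.adj_comm, crown_adj_inl_inr]; exact ne_comm

lemma crown_not_adj_inl {n : ℕ} {i j : Fin n} :
    ¬ (crown n).Adj (Sum.inl i) (Sum.inl j) := by
  simp [crown, SimpleGraph.fromRel_adj]

lemma crown_not_adj_inr {n : ℕ} {i j : Fin n} :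
    ¬ (crown n).Adj (Sum.inr i) (Sum.inr j) := by
  simp [crown, SimpleGraph.fromRel_adj]

/-- If two b-vertices of distinct colors lie on the left side, then `n ≤ k`. -/
lemma key_left {n k : ℕ} {c : Fin n ⊕ Fin n → ℕ}
    (hlt : ∀ v, c v < k) (hpr : ∀ u v, (crown n).Adj u v → c u ≠ c v)
    {p q : Fin n} (hpq : c (Sum.inl p) ≠ c (Sum.inl q))
    (hbp : IsBVertex (crown n) k c (Sum.inl p))
    (hbq : IsBVertex (crown n) k c (Sum.inl q)) : n ≤ k := by
  -- every color < k appears on the right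
  have hright : ∀ d < k, ∃ m : Fin n, c (Sum.inr m) = d := by
    intro d hd
    by_cases hda : d = c (Sum.inl p)
    · obtain ⟨w, hw, hcw⟩ := hbq d hd (hda ▸ hpq)
      rcases w with m | m
      · exact absurd hw crown_not_adj_inl
      · exact ⟨m, hcw⟩
    · obtain ⟨w, hw, hcw⟩ := hbp d hd hda
      rcases w with m | m
      · exact absurd hw crown_not_adj_inl
      · exact ⟨m, hcw⟩
  -- the coloring is injective on the left
  have hinj : Function.Injective (fun j : Fin n => c (Sum.inl j)) := by
    intro j j' hjj'
    simp only at hjj'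
    obtain ⟨m, hm⟩ := hright (c (Sum.inl j)) (hlt _)
    have h1 : j = m := by
      by_contra h
      exact hpr _ _ (crown_adj_inl_inr.2 h) hm.symm
    have h2 : j' = m := by
      by_contra h
      exact hpr _ _ (crown_adj_inl_inr.2 h) (hjj' ▸ hm.symm)
    rw [h1, h2]
  have := Fintype.card_le_of_injective
    (fun j : Fin n => (⟨c (Sum.inl j), hlt _⟩ : Fin k))
    (fun a b h => hinj (by simpa using congrArg Fin.val h))
  simpa using this

lemma key_right {n k : ℕ} {c : Fin n ⊕ Fin n → ℕ}
    (hlt : ∀ v, c v < k) (hpr : ∀ u v, (crown n).Adj u v → c u ≠ c v)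
    {p q : Fin n} (hpq : c (Sum.inr p) ≠ c (Sum.inr q))
    (hbp : IsBVertex (crown n) k c (Sum.inr p))
    (hbq : IsBVertex (crown n) k c (Sum.inr q)) : n ≤ k := by
  have hleft : ∀ d < k, ∃ m : Fin n, c (Sum.inl m) = d := by
    intro d hd
    by_cases hda : d = c (Sum.inr p)
    · obtain ⟨w, hw, hcw⟩ := hbq d hd (hda ▸ hpq)
      rcases w with m | m
      · exact ⟨m, hcw⟩
      · exact absurd hw crown_not_adj_inr
    · obtain ⟨w, hw, hcw⟩ := hbp d hd hda
      rcases w with m | m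
      · exact ⟨m, hcw⟩
      · exact absurd hw crown_not_adj_inr
  have hinj : Function.Injective (fun j : Fin n => c (Sum.inr j)) := by
    intro j j' hjj'
    simp only at hjj'
    obtain ⟨m, hm⟩ := hleft (c (Sum.inr j)) (hlt _)
    have h1 : j = m := by
      by_contra h
      exact hpr _ _ (crown_adj_inr_inl.2 h) hm.symm
    have h2 : j' = m := by
      by_contra h
      exact hpr _ _ (crown_adj_inr_inl.2 h) (hjj' ▸ hm.symm)
    rw [h1, h2]
  have := Fintype.card_le_of_injective
    (fun j : Fin n => (⟨c (Sum.inr j), hlt _⟩ : Fin k))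
    (fun a b h => hinj (by simpa using congrArg Fin.val h))
  simpa using this

/-- For `n ≥ 4`, the graph `K_{n,n}` minus a perfect matching has a b-coloring with `2`
colors and with `n` colors, but no b-coloring with `k` colors for any `2 < k < n`. -/
theorem crown_bSpectrum (n : ℕ) (hn : 4 ≤ n) :
    (∃ c, IsBColoring (crown n) 2 c) ∧ (∃ c, IsBColoring (crown n) n c) ∧
      ∀ k, 2 < k → k < n → ∀ c, ¬ IsBColoring (crown n) k c := by
  have h0 : (0:ℕ) < n := by omega
  have h1 : (1:ℕ) < n := by omega
  refine ⟨?_, ?_, ?_⟩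
  · -- 2-coloring
    refine ⟨Sum.elim (fun _ => 0) (fun _ => 1), ⟨⟨?_, ?_, ?_⟩, ?_⟩⟩
    · rintro (i | i) <;> simp
    · rintro (i | i) (j | j) h <;> simp at h ⊢
      · exact crown_not_adj_inl h
      · exact crown_not_adj_inr h
    · intro i hi
      interval_cases i
      · exact ⟨Sum.inl ⟨0, h0⟩, rfl⟩
      · exact ⟨Sum.inr ⟨0, h0⟩, rfl⟩
    · intro i hi
      interval_cases i
      · refine ⟨Sum.inl ⟨0, h0⟩, rfl, ?_⟩
        intro j hj hj0
        simp only [Sum.elim_inl] at hj0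
        interval_cases j
        · exact absurd rfl hj0
        · exact ⟨Sum.inr ⟨1, h1⟩, crown_adj_inl_inr.2 (by simp [Fin.ext_iff]), rfl⟩
      · refine ⟨Sum.inr ⟨0, h0⟩, rfl, ?_⟩
        intro j hj hj0
        simp only [Sum.elim_inr] at hj0
        interval_cases j
        · exact ⟨Sum.inl ⟨1, h1⟩, crown_adj_inr_inl.2 (by simp [Fin.ext_iff]), rfl⟩
        · exact absurd rfl hj0
  · -- n-coloring
    refine ⟨Sum.elim (fun i => i.val) (fun j => j.val), ⟨⟨?_, ?_, ?_⟩, ?_⟩⟩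
    · rintro (i | i) <;> exact i.isLt
    · rintro (i | i) (j | j) h <;> simp only [Sum.elim_inl, Sum.elim_inr]
      · exact absurd h crown_not_adj_inl
      · exact fun he => (crown_adj_inl_inr.1 h) (Fin.ext he)
      · exact fun he => (crown_adj_inr_inl.1 h) (Fin.ext he)
      · exact absurd h crown_not_adj_inr
    · intro i hi; exact ⟨Sum.inl ⟨i, hi⟩, rfl⟩
    · intro i hi
      refine ⟨Sum.inl ⟨i, hi⟩, rfl, ?_⟩
      intro j hj hji
      refine ⟨Sum.inr ⟨j, hj⟩, crown_adj_inl_inr.2 ?_, rfl⟩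
      intro he
      exact hji (by simpa [Fin.ext_iff] using he.symm)
  · -- impossibility
    rintro k hk2 hkn c ⟨⟨hlt, hpr, hsurj⟩, hb⟩
    obtain ⟨u0, hu0, hb0⟩ := hb 0 (by omega)
    obtain ⟨u1, hu1, hb1⟩ := hb 1 (by omega)
    obtain ⟨u2, hu2, hb2⟩ := hb 2 (by omega)
    have key : n ≤ k := by
      rcases u0 with p0 | p0 <;> rcases u1 with p1 | p1 <;> rcases u2 with p2 | p2
      · exact key_left hlt hpr (by rw [hu0, hu1]; omega) hb0 hb1
      · exact key_left hlt hpr (by rw [hu0, hu1]; omega) hb0 hb1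
      · exact key_left hlt hpr (by rw [hu0, hu2]; omega) hb0 hb2
      · exact key_right hlt hpr (by rw [hu1, hu2]; omega) hb1 hb2
      · exact key_left hlt hpr (by rw [hu1, hu2]; omega) hb1 hb2
      · exact key_right hlt hpr (by rw [hu0, hu2]; omega) hb0 hb2
      · exact key_right hlt hpr (by rw [hu0, hu1]; omega) hb0 hb1
      · exact key_right hlt hpr (by rw [hu0, hu1]; omega) hb0 hb1
    omega
end

section
/- If a graph G has girth at least 7 and contains a k-iris for some integer k ≥ 2χ(G), then G admits a b-coloring with k colors. -/
open SimpleGraph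

variable {V : Type*}

/-- `u` is a `k`-iris: `u` has at least `k-1` neighbors, each of degree at least `k-1`. -/
def IsIris [Fintype V] (G : SimpleGraph V) [DecidableRel G.Adj] (k : ℕ) (u : V) : Prop :=
  ∃ S : Finset V, (∀ v ∈ S, G.Adj u v) ∧ k - 1 ≤ S.card ∧ ∀ v ∈ S, k - 1 ≤ G.degree v

/-! ### Auxiliary lemmas: short cycles are forbidden by girth ≥ 7 -/

section Girth

open SimpleGraph.Walk

variable {G : SimpleGraph V}

private lemma noCycLe6 (hg : (7:ℕ∞) ≤ G.egirth) {a : V} (w : G.Walk a a) (hw : w.IsCycle)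
    (hl : w.length ≤ 6) : False := by
  have h := le_egirth.mp hg a w hw
  have : (7:ℕ∞) ≤ (6:ℕ∞) := h.trans (by exact_mod_cast hl)
  norm_num at this

private lemma noC3 (hg : (7:ℕ∞) ≤ G.egirth) {a b c : V}
    (hab : G.Adj a b) (hbc : G.Adj b c) (hca : G.Adj c a) : False := by
  refine noCycLe6 hg (cons hab (cons hbc (cons hca nil))) ?_ (by simp)
  have h1 := hab.ne; have h2 := hbc.ne; have h3 := hca.ne
  simp only [Walk.isCycle_def, Walk.isTrail_def, Walk.edges_cons, Walk.edges_nil,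
    Walk.support_cons, Walk.support_nil, List.tail_cons, List.nodup_cons, List.nodup_nil,
    List.mem_cons, List.mem_singleton, List.not_mem_nil, Sym2.eq_iff, ne_eq]
  aesop

private lemma noC4 (hg : (7:ℕ∞) ≤ G.egirth) {a b c d : V}
    (hab : G.Adj a b) (hbc : G.Adj b c) (hcd : G.Adj c d) (hda : G.Adj d a)
    (hac : a ≠ c) (hbd : b ≠ d) : False := by
  refine noCycLe6 hg (cons hab (cons hbc (cons hcd (cons hda nil)))) ?_ (by simp)
  have h1 := hab.ne; have h2 := hbc.ne; have h3 := hcd.ne; have h4 := hda.ne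
  simp only [Walk.isCycle_def, Walk.isTrail_def, Walk.edges_cons, Walk.edges_nil,
    Walk.support_cons, Walk.support_nil, List.tail_cons, List.nodup_cons, List.nodup_nil,
    List.mem_cons, List.mem_singleton, List.not_mem_nil, Sym2.eq_iff, ne_eq]
  aesop

private lemma noC5 (hg : (7:ℕ∞) ≤ G.egirth) {a b c d e : V}
    (hab : G.Adj a b) (hbc : G.Adj b c) (hcd : G.Adj c d) (hde : G.Adj d e) (hea : G.Adj e a)
    (hac : a ≠ c) (had : a ≠ d) (hbd : b ≠ d) (hbe : b ≠ e) (hce : c ≠ e) : False := by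
  refine noCycLe6 hg (cons hab (cons hbc (cons hcd (cons hde (cons hea nil))))) ?_ (by simp)
  have h1 := hab.ne; have h2 := hbc.ne; have h3 := hcd.ne; have h4 := hde.ne; have h5 := hea.ne
  simp only [Walk.isCycle_def, Walk.isTrail_def, Walk.edges_cons, Walk.edges_nil,
    Walk.support_cons, Walk.support_nil, List.tail_cons, List.nodup_cons, List.nodup_nil,
    List.mem_cons, List.mem_singleton, List.not_mem_nil, Sym2.eq_iff, ne_eq]
  aesop

private lemma noC6 (hg : (7:ℕ∞) ≤ G.egirth) {a b c d e f : V}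
    (hab : G.Adj a b) (hbc : G.Adj b c) (hcd : G.Adj c d) (hde : G.Adj d e) (hef : G.Adj e f)
    (hfa : G.Adj f a)
    (hac : a ≠ c) (had : a ≠ d) (hae : a ≠ e) (hbd : b ≠ d) (hbe : b ≠ e) (hbf : b ≠ f)
    (hce : c ≠ e) (hcf : c ≠ f) (hdf : d ≠ f) : False := by
  refine noCycLe6 hg (cons hab (cons hbc (cons hcd (cons hde (cons hef (cons hfa nil)))))) ?_
    (by simp)
  have h1 := hab.ne; have h2 := hbc.ne; have h3 := hcd.ne; have h4 := hde.ne; have h5 := hef.ne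
  have h6 := hfa.ne
  simp only [Walk.isCycle_def, Walk.isTrail_def, Walk.edges_cons, Walk.edges_nil,
    Walk.support_cons, Walk.support_nil, List.tail_cons, List.nodup_cons, List.nodup_nil,
    List.mem_cons, List.mem_singleton, List.not_mem_nil, Sym2.eq_iff, ne_eq]
  aesop

end Girth

/-! ### Auxiliary color bookkeeping -/

/-- The `j`-th color distinct from `i+1` in the palette `1, …`. -/
private def sIdx (i j : ℕ) : ℕ := if j < i then j + 1 else j + 2

private lemma sIdx_le (i j : ℕ) : sIdx i j ≤ j + 2 := by unfold sIdx; split <;> omega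

private lemma sIdx_pos (i j : ℕ) : 1 ≤ sIdx i j := by unfold sIdx; split <;> omega

private lemma sIdx_ne (i j : ℕ) : sIdx i j ≠ i + 1 := by unfold sIdx; split <;> omega

private lemma sIdx_inj (i j j' : ℕ) (h : sIdx i j = sIdx i j') : j = j' := by
  unfold sIdx at h; split at h <;> split at h <;> omega

private lemma sIdx_surj (k i t : ℕ) (hi : i < k - 1) (h1 : 1 ≤ t) (h2 : t < k)
    (h3 : t ≠ i + 1) : ∃ j, j < k - 2 ∧ sIdx i j = t := by
  unfold sIdx
  by_cases h : t ≤ i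
  · exact ⟨t - 1, by omega, by rw [if_pos (by omega)]; omega⟩
  · exact ⟨t - 2, by omega, by rw [if_neg (by omega)]; omega⟩

/-- Membership in the "precolored" set: the iris `u`, the chosen neighbors `v i`,
and their chosen second-neighbors `a i j`. -/
private def inPre (u : V) {k : ℕ} (v : Fin (k-1) → V)
    (a : Fin (k-1) → Fin (k-2) → V) (w : V) : Prop :=
  w = u ∨ (∃ i, v i = w) ∨ (∃ p : Fin (k-1) × Fin (k-2), a p.1 p.2 = w)

open Classical in
/-- The color assigned to precolored vertices. -/
private noncomputable def preC (u : V) {k : ℕ} (v : Fin (k-1) → V)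
    (a : Fin (k-1) → Fin (k-2) → V) (w : V) : ℕ :=
  if w = u then 0
  else if h : ∃ i, v i = w then (h.choose : ℕ) + 1
  else if h : ∃ p : Fin (k-1) × Fin (k-2), a p.1 p.2 = w then
    sIdx (h.choose.1 : ℕ) (h.choose.2 : ℕ)
  else 0

open Classical in
/-- The full coloring. -/
private noncomputable def colFun (G : SimpleGraph V) (u : V) {k : ℕ} (v : Fin (k-1) → V)
    (a : Fin (k-1) → Fin (k-2) → V) (m : ℕ) (c0 : V → ℕ) (w : V) : ℕ :=
  if inPre u v a w then preC u v a w
  else if ∃ p, inPre u v a p ∧ G.Adj w p ∧ preC u v a p = c0 w then m + c0 w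
  else c0 w

section lemmas

variable {G : SimpleGraph V} {u : V} {k : ℕ} {v : Fin (k-1) → V}
  {a : Fin (k-1) → Fin (k-2) → V} {m : ℕ} {c0 : V → ℕ}

private lemma preC_u : preC u v a u = 0 := by unfold preC; rw [if_pos rfl]

private lemma preC_v (hvu : ∀ i, v i ≠ u) (hvinj : Function.Injective v) (i : Fin (k-1)) :
    preC u v a (v i) = (i : ℕ) + 1 := by
  have h : ∃ i', v i' = v i := ⟨i, rfl⟩
  unfold preC
  rw [if_neg (hvu i), dif_pos h]
  have := hvinj h.choose_spec
  rw [this]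

private lemma preC_a (hau : ∀ i j, a i j ≠ u) (hav : ∀ i j i', v i' ≠ a i j)
    (hainj : ∀ i j i' j', a i j = a i' j' → i = i' ∧ j = j') (i : Fin (k-1)) (j : Fin (k-2)) :
    preC u v a (a i j) = sIdx (i : ℕ) (j : ℕ) := by
  have h : ∃ p : Fin (k-1) × Fin (k-2), a p.1 p.2 = a i j := ⟨(i, j), rfl⟩
  unfold preC
  rw [if_neg (hau i j), dif_neg (by rintro ⟨i', hi'⟩; exact hav i j i' hi'), dif_pos h]
  obtain ⟨h1, h2⟩ := hainj _ _ _ _ h.choose_spec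
  rw [h1, h2]

private lemma colFun_of_pre {w : V} (h : inPre u v a w) :
    colFun G u v a m c0 w = preC u v a w := by unfold colFun; rw [if_pos h]

private lemma colFun_of_npre_pos {w : V} (hw : ¬ inPre u v a w)
    (h : ∃ p, inPre u v a p ∧ G.Adj w p ∧ preC u v a p = c0 w) :
    colFun G u v a m c0 w = m + c0 w := by unfold colFun; rw [if_neg hw, if_pos h]

private lemma colFun_of_npre_neg {w : V} (hw : ¬ inPre u v a w)
    (h : ¬ ∃ p, inPre u v a p ∧ G.Adj w p ∧ preC u v a p = c0 w) :
    colFun G u v a m c0 w = c0 w := by unfold colFun; rw [if_neg hw, if_neg h]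

end lemmas

/-- If `G` has girth at least 7 and a `k`-iris with `k ≥ 2χ(G)`, then `G` has a b-coloring
with `k` colors. -/
theorem bColoring_of_iris [Fintype V] (G : SimpleGraph V) [DecidableRel G.Adj]
    (hg : (7 : ℕ∞) ≤ G.egirth) (k : ℕ) (u : V) (hu : IsIris G k u)
    (hk : 2 * G.chromaticNumber ≤ (k : ℕ∞)) :
    ∃ c : V → ℕ, IsBColoring G k c := by
  classical
  obtain ⟨S, hSadj, hScard, hSdeg⟩ := hu
  -- the chromatic coloring
  have hcol : G.Colorable (G.chromaticNumber.toNat) := G.colorable_chromaticNumber_of_fintype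
  set m := G.chromaticNumber.toNat with hmdef
  have hχ : G.chromaticNumber = (m : ℕ∞) := by
    rw [hmdef, ENat.coe_toNat]
    exact fun h => (chromaticNumber_ne_top_iff_exists.mpr ⟨_, hcol⟩) h
  obtain ⟨C⟩ := hcol
  have hm1 : 1 ≤ m := by
    rcases Nat.eq_zero_or_pos m with h | h
    · exact ((h ▸ (C u) : Fin 0)).elim0
    · exact h
  have hkm : 2 * m ≤ k := by
    rw [hχ] at hk
    exact_mod_cast hk
  have hk2 : 2 ≤ k := le_trans (by omega) hkm
  -- choose the k-1 neighbors of u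
  obtain ⟨S', hS'sub, hS'card⟩ := Finset.exists_subset_card_eq hScard
  have eS : (S' : Type _) ≃ Fin (k-1) :=
    Fintype.equivFinOfCardEq (by rw [Fintype.card_coe, hS'card])
  set v : Fin (k-1) → V := fun i => (eS.symm i : V) with hvdef
  have hv_mem : ∀ i, v i ∈ S' := fun i => (eS.symm i).2
  have hv_inj : Function.Injective v := by
    intro i i' h
    exact eS.symm.injective (Subtype.val_injective h)
  have hv_adj : ∀ i, G.Adj u (v i) := fun i => hSadj _ (hS'sub (hv_mem i))
  have hvu : ∀ i, v i ≠ u := fun i => (hv_adj i).ne'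
  have hvnei : ∀ i i', i ≠ i' → v i ≠ v i' := fun i i' h he => h (hv_inj he)
  -- choose the k-2 second-neighbors
  have hF : ∀ i : Fin (k-1), k - 2 ≤ ((G.neighborFinset (v i)).erase u).card := by
    intro i
    have h1 : k - 1 ≤ (G.neighborFinset (v i)).card := by
      rw [card_neighborFinset_eq_degree]; exact hSdeg _ (hS'sub (hv_mem i))
    calc k - 2 ≤ (G.neighborFinset (v i)).card - 1 := by omega
    _ ≤ _ := Finset.pred_card_le_card_erase
  have hT : ∀ i, ∃ T ⊆ (G.neighborFinset (v i)).erase u, T.card = k - 2 :=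
    fun i => Finset.exists_subset_card_eq (hF i)
  choose T hTsub hTcard using hT
  have eT : ∀ i, (T i : Type _) ≃ Fin (k-2) :=
    fun i => Fintype.equivFinOfCardEq (by rw [Fintype.card_coe, hTcard])
  set a : Fin (k-1) → Fin (k-2) → V := fun i j => ((eT i).symm j : V) with hadef
  have ha_mem : ∀ i j, a i j ∈ (G.neighborFinset (v i)).erase u :=
    fun i j => hTsub i ((eT i).symm j).2
  have hva : ∀ i j, G.Adj (v i) (a i j) := by
    intro i j
    have := (Finset.mem_erase.mp (ha_mem i j)).2
    exact (mem_neighborFinset _ _ _).mp this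
  have hau : ∀ i j, a i j ≠ u := fun i j => (Finset.mem_erase.mp (ha_mem i j)).1
  -- nonadjacency / distinctness facts from girth ≥ 7
  have hau' : ∀ i j, ¬ G.Adj u (a i j) := fun i j h => noC3 hg (hv_adj i) (hva i j) h.symm
  have hvv' : ∀ i i', ¬ G.Adj (v i) (v i') := by
    intro i i' h
    by_cases hii : i = i'
    · subst hii; exact h.ne rfl
    · exact noC3 hg (hv_adj i) h (hv_adj i').symm
  have hav : ∀ i j i', v i' ≠ a i j := by
    intro i j i' he
    by_cases hii : i' = i
    · subst hii; exact (hva i' j).ne he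
    · apply hvv' i i'; rw [he]; exact hva i j
  have ha_inj : ∀ i j i' j', a i j = a i' j' → i = i' ∧ j = j' := by
    intro i j i' j' he
    by_cases hii : i = i'
    · subst hii
      refine ⟨rfl, ?_⟩
      exact (eT i).symm.injective (Subtype.val_injective he)
    · exact absurd he fun he =>
        noC4 hg (hv_adj i) (hva i j) (by rw [he]; exact (hva i' j').symm) (hv_adj i').symm
          (Ne.symm (hau i j)) (hvnei i i' hii)
  have hva' : ∀ i j i', i ≠ i' → ¬ G.Adj (v i') (a i j) := by
    intro i j i' hii h
    exact noC4 hg (hv_adj i') h (hva i j).symm (hv_adj i).symm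
      (Ne.symm (hau i j)) (hvnei i' i (Ne.symm hii))
  have haa' : ∀ i j i' j', ¬ G.Adj (a i j) (a i' j') := by
    intro i j i' j' h
    by_cases hii : i = i'
    · subst hii
      by_cases hjj : j = j'
      · subst hjj; exact h.ne rfl
      · exact noC3 hg (hva i j) h (hva i j').symm
    · exact noC5 hg (hv_adj i) (hva i j) h (hva i' j').symm (hv_adj i').symm
        (Ne.symm (hau i j)) (Ne.symm (hau i' j')) (hav i' j' i) (hvnei i i' hii)
        (Ne.symm (hav i j i'))
  -- uniqueness of the precolored neighbor of a non-precolored vertex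
  have huniq : ∀ w, ¬ inPre u v a w → ∀ p q, inPre u v a p → inPre u v a q →
      G.Adj w p → G.Adj w q → p = q := by
    intro w hw p q hp hq hwp hwq
    have hwu : w ≠ u := fun h => hw (Or.inl h)
    have hwv : ∀ i, v i ≠ w := fun i h => hw (Or.inr (Or.inl ⟨i, h⟩))
    have hwa : ∀ i j, a i j ≠ w := fun i j h => hw (Or.inr (Or.inr ⟨(i, j), h⟩))
    rcases hp with hp | ⟨i, hp⟩ | ⟨⟨i, j⟩, hp⟩ <;>
      rcases hq with hq | ⟨i', hq⟩ | ⟨⟨i', j'⟩, hq⟩ <;> subst hp <;> subst hq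
    · rfl
    · exact (noC3 hg (hv_adj i') hwq.symm hwp).elim
    · exact (noC4 hg (hv_adj i') (hva i' j') hwq.symm hwp
        (Ne.symm (hau i' j')) (hwv i')).elim
    · exact (noC3 hg (hv_adj i) hwp.symm hwq).elim
    · by_cases hii : i = i'
      · rw [hii]
      · exact (noC4 hg (hv_adj i) hwp.symm hwq (hv_adj i').symm
          (Ne.symm hwu) (hvnei i i' hii)).elim
    · by_cases hii : i = i'
      · subst hii
        exact (noC3 hg hwp.symm hwq (hva i j').symm).elim
      · exact (noC5 hg (hv_adj i) hwp.symm hwq (hva i' j').symm (hv_adj i').symm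
          (Ne.symm hwu) (Ne.symm (hau i' j')) (hav i' j' i) (hvnei i i' hii)
          ((hwv i').symm)).elim
    · exact (noC4 hg (hv_adj i) (hva i j) hwp.symm hwq
        (Ne.symm (hau i j)) (hwv i)).elim
    · by_cases hii : i' = i
      · subst hii
        exact (noC3 hg hwq.symm hwp (hva i' j).symm).elim
      · exact (noC5 hg (hv_adj i') hwq.symm hwp (hva i j).symm (hv_adj i).symm
          (Ne.symm hwu) (Ne.symm (hau i j)) (hav i j i') (hvnei i' i hii)
          ((hwv i).symm)).elim
    · by_cases hii : i = i'
      · subst hii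
        by_cases hjj : j = j'
        · rw [hjj]
        · exact (noC4 hg (hva i j) hwp.symm hwq (hva i j').symm
            (hwv i) (fun he => hjj (ha_inj _ _ _ _ he).2)).elim
      · exact (noC6 hg (hv_adj i) (hva i j) hwp.symm hwq (hva i' j').symm (hv_adj i').symm
          (Ne.symm (hau i j)) (Ne.symm hwu) (Ne.symm (hau i' j')) (hwv i)
          (hav i' j' i) (hvnei i i' hii) (fun he => hii (ha_inj _ _ _ _ he).1)
          (Ne.symm (hav i j i')) ((hwv i').symm)).elim
  -- the base coloring
  set c0 : V → ℕ := fun w => (C w : ℕ) with hc0def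
  have hc0lt : ∀ w, c0 w < m := fun w => (C w).isLt
  have hc0ne : ∀ {x y}, G.Adj x y → c0 x ≠ c0 y :=
    fun h he => C.valid h (Fin.val_injective he)
  set c : V → ℕ := colFun G u v a m c0 with hcdef
  have hPu : inPre u v a u := Or.inl rfl
  have hPv : ∀ i, inPre u v a (v i) := fun i => Or.inr (Or.inl ⟨i, rfl⟩)
  have hPa : ∀ i j, inPre u v a (a i j) := fun i j => Or.inr (Or.inr ⟨(i, j), rfl⟩)
  have hcu : c u = 0 := by rw [hcdef, colFun_of_pre hPu, preC_u]
  have hcv : ∀ i, c (v i) = (i : ℕ) + 1 := by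
    intro i; rw [hcdef, colFun_of_pre (hPv i), preC_v hvu hv_inj]
  have hca : ∀ i j, c (a i j) = sIdx (i : ℕ) (j : ℕ) := by
    intro i j; rw [hcdef, colFun_of_pre (hPa i j), preC_a hau hav ha_inj]
  -- properness among precolored vertices
  have hpre_ne : ∀ p q, inPre u v a p → inPre u v a q → G.Adj p q →
      preC u v a p ≠ preC u v a q := by
    intro p q hp hq hadj
    rcases hp with hp | ⟨i, hp⟩ | ⟨⟨i, j⟩, hp⟩ <;>
      rcases hq with hq | ⟨i', hq⟩ | ⟨⟨i', j'⟩, hq⟩ <;> subst hp <;> subst hq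
    · exact absurd rfl hadj.ne
    · rw [preC_u, preC_v hvu hv_inj]; omega
    · exact (hau' i' j' hadj).elim
    · rw [preC_u, preC_v hvu hv_inj]; omega
    · exact (hvv' i i' hadj).elim
    · by_cases hii : i = i'
      · subst hii
        rw [preC_v hvu hv_inj, preC_a hau hav ha_inj]
        exact fun he => sIdx_ne _ _ he.symm
      · exact (hva' i' j' i (Ne.symm hii) hadj).elim
    · exact (hau' i j hadj.symm).elim
    · by_cases hii : i' = i
      · subst hii
        rw [preC_v hvu hv_inj, preC_a hau hav ha_inj]
        exact fun he => sIdx_ne _ _ he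
      · exact (hva' i j i' (Ne.symm hii) hadj.symm).elim
    · exact (haa' i j i' j' hadj).elim
  -- properness
  have hproper : ∀ x y, G.Adj x y → c x ≠ c y := by
    intro x y hadj heq
    by_cases hx : inPre u v a x <;> by_cases hy : inPre u v a y
    · rw [hcdef, colFun_of_pre hx, colFun_of_pre hy] at heq
      exact hpre_ne _ _ hx hy hadj heq
    · by_cases hcond : ∃ p, inPre u v a p ∧ G.Adj y p ∧ preC u v a p = c0 y
      · rw [hcdef, colFun_of_pre hx, colFun_of_npre_pos hy hcond] at heq
        obtain ⟨p, hpP, hyp, hpc⟩ := hcond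
        have hpx : p = x := huniq y hy p x hpP hx hyp hadj.symm
        subst hpx
        rw [hpc] at heq
        omega
      · rw [hcdef, colFun_of_pre hx, colFun_of_npre_neg hy hcond] at heq
        exact hcond ⟨x, hx, hadj.symm, heq⟩
    · by_cases hcond : ∃ p, inPre u v a p ∧ G.Adj x p ∧ preC u v a p = c0 x
      · rw [hcdef, colFun_of_pre hy, colFun_of_npre_pos hx hcond] at heq
        obtain ⟨p, hpP, hxp, hpc⟩ := hcond
        have hpy : p = y := huniq x hx p y hpP hy hxp hadj
        subst hpy
        rw [hpc] at heq
        omega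
      · rw [hcdef, colFun_of_pre hy, colFun_of_npre_neg hx hcond] at heq
        exact hcond ⟨y, hy, hadj, heq.symm⟩
    · have h1 : c0 x ≠ c0 y := hc0ne hadj
      have h2 := hc0lt x
      have h3 := hc0lt y
      by_cases hcx : ∃ p, inPre u v a p ∧ G.Adj x p ∧ preC u v a p = c0 x <;>
        by_cases hcy : ∃ p, inPre u v a p ∧ G.Adj y p ∧ preC u v a p = c0 y
      · rw [hcdef, colFun_of_npre_pos hx hcx, colFun_of_npre_pos hy hcy] at heq; omega
      · rw [hcdef, colFun_of_npre_pos hx hcx, colFun_of_npre_neg hy hcy] at heq; omega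
      · rw [hcdef, colFun_of_npre_neg hx hcx, colFun_of_npre_pos hy hcy] at heq; omega
      · rw [hcdef, colFun_of_npre_neg hx hcx, colFun_of_npre_neg hy hcy] at heq; omega
  -- bounds
  have hlt : ∀ w, c w < k := by
    intro w
    by_cases hw : inPre u v a w
    · rcases hw with h | ⟨i, h⟩ | ⟨⟨i, j⟩, h⟩
      · subst h; rw [hcu]; omega
      · rw [← h, hcv i]
        have := i.isLt; omega
      · rw [← h, hca i j]
        have h1 := sIdx_le (i : ℕ) (j : ℕ)
        have h2 := j.isLt
        omega
    · have h2 := hc0lt w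
      by_cases hcond : ∃ p, inPre u v a p ∧ G.Adj w p ∧ preC u v a p = c0 w
      · rw [hcdef, colFun_of_npre_pos hw hcond]; omega
      · rw [hcdef, colFun_of_npre_neg hw hcond]; omega
  refine ⟨c, ⟨hlt, hproper, ?_⟩, ?_⟩
  · -- all colors used
    intro t ht
    rcases Nat.eq_zero_or_pos t with h0 | h0
    · exact ⟨u, by rw [hcu, h0]⟩
    · refine ⟨v ⟨t - 1, by omega⟩, ?_⟩
      rw [hcv]
      show t - 1 + 1 = t
      omega
  · -- b-vertices
    intro t ht
    rcases Nat.eq_zero_or_pos t with h0 | h0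
    · subst h0
      refine ⟨u, hcu, ?_⟩
      intro s hs hsne
      rw [hcu] at hsne
      refine ⟨v ⟨s - 1, by omega⟩, hv_adj _, ?_⟩
      rw [hcv]
      show s - 1 + 1 = s
      omega
    · set i : Fin (k-1) := ⟨t - 1, by omega⟩ with hidef
      have hcvi : c (v i) = t := by
        rw [hcv]
        show t - 1 + 1 = t
        omega
      refine ⟨v i, hcvi, ?_⟩
      intro s hs hsne
      rw [hcvi] at hsne
      rcases Nat.eq_zero_or_pos s with hs0 | hs0
      · exact ⟨u, (hv_adj i).symm, by rw [hcu, hs0]⟩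
      · obtain ⟨jn, hjn, hjs⟩ := sIdx_surj k (i : ℕ) s i.isLt hs0 hs
          (by show s ≠ t - 1 + 1; omega)
        refine ⟨a i ⟨jn, hjn⟩, hva i _, ?_⟩
        rw [hca]
        exact hjs
end

section
/- For every graph G, the partial Grundy number ∂Γ(G) is at most the stair factor s(G). -/
open SimpleGraph

variable {V : Type*}

/-- A partial Grundy coloring of `G` with `k` colors: a proper coloring using exactly the
colors `0, …, k-1` such that every color class `i` contains a Grundy vertex, i.e. a vertex
having a neighbor of every color `j < i`. -/
def IsPartialGrundy (G : SimpleGraph V) (k : ℕ) (c : V → ℕ) : Prop :=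
  (∀ v, c v < k) ∧ (∀ u v, G.Adj u v → c u ≠ c v) ∧
    ∀ i < k, ∃ u, c u = i ∧ ∀ j < i, ∃ w, G.Adj u w ∧ c w = j

/-- `(w 0, …, w (s-1))` is a feasible sequence: the vertices are distinct and `w i` has
degree at least `i` in the graph obtained from `G` by deleting `w (i+1), …, w (s-1)`.
(With 1-based indexing as in the paper this is degree at least `i - 1`.) -/
def IsFeasibleSeq (G : SimpleGraph V) {s : ℕ} (w : Fin s → V) : Prop :=
  Function.Injective w ∧
    ∀ i : Fin s, (i : ℕ) ≤ (G.neighborSet (w i) \ {v | ∃ j : Fin s, i < j ∧ w j = v}).ncard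

/-- The partial Grundy number `∂Γ(G)`. -/
noncomputable def partialGrundy [Fintype V] (G : SimpleGraph V) : ℕ :=
  sSup {k | ∃ c : V → ℕ, IsPartialGrundy G k c}

/-- The stair factor `s(G)`: the maximum length of a feasible sequence. -/
noncomputable def stairFactor [Fintype V] (G : SimpleGraph V) : ℕ :=
  sSup {s | ∃ w : Fin s → V, IsFeasibleSeq G w}

/-- For every graph `G`, the partial Grundy number is at most the stair factor. -/
theorem partialGrundy_le_stairFactor [Fintype V] (G : SimpleGraph V) :
    partialGrundy G ≤ stairFactor G := by
  classical
  set S := {k | ∃ c : V → ℕ, IsPartialGrundy G k c} with hS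
  set T := {s | ∃ w : Fin s → V, IsFeasibleSeq G w} with hT
  -- S ⊆ T
  have hsub : S ⊆ T := by
    rintro k ⟨c, hlt, hproper, hgrundy⟩
    -- choose Grundy vertices
    have hchoice : ∀ i : Fin k, ∃ u, c u = (i : ℕ) ∧
        ∀ j < (i : ℕ), ∃ w, G.Adj u w ∧ c w = j := fun i => hgrundy i i.isLt
    choose u hu hnb using hchoice
    refine ⟨u, ?_, ?_⟩
    · intro i j hij
      have : (i : ℕ) = (j : ℕ) := by rw [← hu i, ← hu j, hij]
      exact Fin.ext this
    · intro i
      -- neighbors of colors 0..i-1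
      have hnbi : ∀ j : Fin (i : ℕ), ∃ w, G.Adj (u i) w ∧ c w = (j : ℕ) :=
        fun j => hnb i j j.isLt
      choose f hfadj hfc using hnbi
      have hfinj : Function.Injective f := by
        intro a b hab
        have : (a : ℕ) = (b : ℕ) := by rw [← hfc a, ← hfc b, hab]
        exact Fin.ext this
      have hrange : Set.range f ⊆
          G.neighborSet (u i) \ {v | ∃ j : Fin k, i < j ∧ u j = v} := by
        rintro v ⟨a, rfl⟩
        refine ⟨hfadj a, ?_⟩
        rintro ⟨j, hij, hj⟩
        have h1 : c (f a) = (a : ℕ) := hfc a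
        have h2 : c (u j) = (j : ℕ) := hu j
        rw [hj] at h2
        rw [h1] at h2
        have : (a : ℕ) < (i : ℕ) := a.isLt
        omega
      have hfin : (G.neighborSet (u i) \ {v | ∃ j : Fin k, i < j ∧ u j = v}).Finite :=
        Set.toFinite _
      have h1 : (Set.range f).ncard = (i : ℕ) := by
        rw [← Set.image_univ, Set.ncard_image_of_injective _ hfinj, Set.ncard_univ,
          Nat.card_eq_fintype_card, Fintype.card_fin]
      calc (i : ℕ) = (Set.range f).ncard := h1.symm
        _ ≤ _ := Set.ncard_le_ncard hrange hfin
  -- T is bounded above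
  have hbdd : BddAbove T := by
    refine ⟨Fintype.card V, ?_⟩
    rintro s ⟨w, hwinj, -⟩
    simpa using Fintype.card_le_of_injective w hwinj
  rcases S.eq_empty_or_nonempty with h | h
  · simp [partialGrundy, ← hS, h]
  · exact csSup_le_csSup hbdd h hsub
end

section
/- For every n ≥ 1, the stair factor of the complete bipartite graph K_{n,n} equals n+1. -/
open SimpleGraph

variable {V : Type*}

lemma ncard_neighborSet_cbg (n : ℕ) (v : Fin n ⊕ Fin n) :
    ((completeBipartiteGraph (Fin n) (Fin n)).neighborSet v).ncard = n := by
  cases v with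
  | inl a =>
    have : (completeBipartiteGraph (Fin n) (Fin n)).neighborSet (Sum.inl a) = Set.range Sum.inr := by
      ext x; cases x <;> simp [completeBipartiteGraph, neighborSet]
    rw [this, Set.ncard_eq_toFinset_card', Set.toFinset_range]
    simp [Finset.card_image_of_injective _ Sum.inr_injective]
  | inr a =>
    have : (completeBipartiteGraph (Fin n) (Fin n)).neighborSet (Sum.inr a) = Set.range Sum.inl := by
      ext x; cases x <;> simp [completeBipartiteGraph, neighborSet]
    rw [this, Set.ncard_eq_toFinset_card', Set.toFinset_range]
    simp [Finset.card_image_of_injective _ Sum.inl_injective]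

/-- For `n ≥ 1`, the stair factor of `K_{n,n}` is `n + 1`. -/
theorem stairFactor_completeBipartite (n : ℕ) (hn : 1 ≤ n) :
    stairFactor (completeBipartiteGraph (Fin n) (Fin n)) = n + 1 := by
  set G := completeBipartiteGraph (Fin n) (Fin n) with hG
  have hub : ∀ s ∈ {s | ∃ w : Fin s → Fin n ⊕ Fin n, IsFeasibleSeq G w}, s ≤ n + 1 := by
    rintro s ⟨w, hinj, hdeg⟩
    rcases s with _ | m
    · omega
    have h := hdeg (Fin.last m)
    have hempty : {v | ∃ j : Fin (m+1), Fin.last m < j ∧ w j = v} = ∅ := by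
      ext v; simp only [Set.mem_setOf_eq, Set.mem_empty_iff_false, iff_false]
      rintro ⟨j, hj, -⟩
      exact absurd (Fin.le_last j) (not_le.mpr hj)
    rw [hempty, Set.diff_empty, ncard_neighborSet_cbg] at h
    simpa using Nat.add_le_add_right h 1
  have hmem : n + 1 ∈ {s | ∃ w : Fin s → Fin n ⊕ Fin n, IsFeasibleSeq G w} := by
    refine ⟨fun i => if h : (i : ℕ) = 0 then Sum.inl ⟨0, hn⟩ else
      Sum.inr ⟨(i : ℕ) - 1, by omega⟩, ?_, ?_⟩
    · intro a b hab
      by_cases ha : (a : ℕ) = 0 <;> by_cases hb : (b : ℕ) = 0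
      · exact Fin.ext (by omega)
      · simp only [dif_pos ha, dif_neg hb] at hab; exact absurd hab (by simp)
      · simp only [dif_neg ha, dif_pos hb] at hab; exact absurd hab (by simp)
      · simp only [dif_neg ha, dif_neg hb] at hab
        have : (a : ℕ) - 1 = (b : ℕ) - 1 := by
          simpa [Fin.ext_iff] using hab
        exact Fin.ext (by omega)
    · intro i
      by_cases hi : (i : ℕ) = 0
      · simp [hi]
      · have hset : (G.neighborSet (Sum.inr ⟨(i : ℕ) - 1, by omega⟩) \
            {v | ∃ j : Fin (n+1), i < j ∧
              (if h : (j : ℕ) = 0 then Sum.inl ⟨0, hn⟩ else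
                Sum.inr ⟨(j : ℕ) - 1, by omega⟩) = v}) =
            G.neighborSet (Sum.inr ⟨(i : ℕ) - 1, by omega⟩) := by
          ext v
          simp only [Set.mem_diff, Set.mem_setOf_eq, and_iff_left_iff_imp]
          rintro hv ⟨j, hj, rfl⟩
          have hj0 : (j : ℕ) ≠ 0 := by
            intro h; exact hi (by omega)
          rw [dif_neg hj0] at hv
          simp [hG, completeBipartiteGraph, neighborSet] at hv
        simp only [dif_neg hi]
        rw [hset, ncard_neighborSet_cbg]
        omega
  refine le_antisymm (csSup_le ⟨n + 1, hmem⟩ hub) (le_csSup ⟨n + 1, hub⟩ hmem)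
end

section
/- For every n ≥ 2, every partial Grundy coloring of the complete bipartite graph K_{n,n} uses exactly 2 colors; in particular ∂Γ(K_{n,n}) = 2 < s(K_{n,n}) = n+1. -/
open SimpleGraph

variable {V : Type*}

lemma adjBP {n : ℕ} {u v : Fin n ⊕ Fin n}
    (h : (completeBipartiteGraph (Fin n) (Fin n)).Adj u v) : u.isLeft = !v.isLeft := by
  rcases u with a | a <;> rcases v with b | b <;> simp_all

lemma key_lemma {n : ℕ} (hn : 2 ≤ n) (k : ℕ) (c : Fin n ⊕ Fin n → ℕ)
    (h : IsPartialGrundy (completeBipartiteGraph (Fin n) (Fin n)) k c) : k = 2 := by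
  obtain ⟨h1, h2, h3⟩ := h
  have hn0 : 0 < n := by omega
  have hside : ∀ u v : Fin n ⊕ Fin n, c u = c v → u.isLeft = v.isLeft := by
    intro u v hcv
    by_contra hne
    refine h2 u v ?_ hcv
    rcases u with a | a <;> rcases v with b | b <;> simp_all
  have hk1 : 0 < k := lt_of_le_of_lt (Nat.zero_le _) (h1 (Sum.inl ⟨0, hn0⟩))
  have hk2 : k ≠ 1 := by
    rintro rfl
    have hA := h1 (Sum.inl ⟨0, hn0⟩)
    have hB := h1 (Sum.inr ⟨0, hn0⟩)
    exact h2 (Sum.inl ⟨0, hn0⟩) (Sum.inr ⟨0, hn0⟩) (by simp) (by omega)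
  by_contra hk
  have hk3 : 2 < k := by omega
  obtain ⟨u, hu, hnb⟩ := h3 2 hk3
  obtain ⟨w0, haw0, hcw0⟩ := hnb 0 (by norm_num)
  obtain ⟨w1, haw1, hcw1⟩ := hnb 1 (by norm_num)
  obtain ⟨u1, hu1, hnb1⟩ := h3 1 (by omega)
  obtain ⟨z, hz, hcz⟩ := hnb1 0 (by norm_num)
  have e1 := adjBP haw0
  have e2 := adjBP haw1
  have e3 := adjBP hz
  have e4 := hside u1 w1 (by omega)
  have e5 := hside z w0 (by omega)
  have f1 : w0.isLeft = w1.isLeft := by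
    have h' := e1.symm.trans e2
    revert h'; cases w0.isLeft <;> cases w1.isLeft <;> simp
  have f2 : w1.isLeft = !w0.isLeft := by rw [← e4, e3, e5]
  rw [f1] at f2
  rcases w1 with a | a <;> simp at f2

lemma grundy_two_mem {n : ℕ} (hn : 2 ≤ n) :
    IsPartialGrundy (completeBipartiteGraph (Fin n) (Fin n)) 2
      (Sum.elim (fun _ => 0) (fun _ => 1)) := by
  have hn0 : 0 < n := by omega
  refine ⟨?_, ?_, ?_⟩
  · rintro (a | a) <;> simp
  · rintro (a | a) (b | b) hab <;> simp_all
  · intro i hi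
    interval_cases i
    · exact ⟨Sum.inl ⟨0, hn0⟩, by simp, by omega⟩
    · refine ⟨Sum.inr ⟨0, hn0⟩, by simp, ?_⟩
      intro j hj
      interval_cases j
      exact ⟨Sum.inl ⟨0, hn0⟩, by simp⟩

lemma nbhd_card_le {n : ℕ} (v : Fin n ⊕ Fin n) :
    ((completeBipartiteGraph (Fin n) (Fin n)).neighborSet v).ncard ≤ n := by
  rcases v with a | a
  · have hsub : (completeBipartiteGraph (Fin n) (Fin n)).neighborSet (Sum.inl a) ⊆
        Set.range (Sum.inr : Fin n → Fin n ⊕ Fin n) := by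
      rintro (b | b) hb <;> simp_all [neighborSet]
    calc _ ≤ (Set.range (Sum.inr : Fin n → Fin n ⊕ Fin n)).ncard :=
          Set.ncard_le_ncard hsub (Set.toFinite _)
      _ = n := by
          rw [← Set.image_univ, Set.ncard_image_of_injective _ Sum.inr_injective,
            Set.ncard_univ, Nat.card_eq_fintype_card, Fintype.card_fin]
  · have hsub : (completeBipartiteGraph (Fin n) (Fin n)).neighborSet (Sum.inr a) ⊆
        Set.range (Sum.inl : Fin n → Fin n ⊕ Fin n) := by
      rintro (b | b) hb <;> simp_all [neighborSet]
    calc _ ≤ (Set.range (Sum.inl : Fin n → Fin n ⊕ Fin n)).ncard :=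
          Set.ncard_le_ncard hsub (Set.toFinite _)
      _ = n := by
          rw [← Set.image_univ, Set.ncard_image_of_injective _ Sum.inl_injective,
            Set.ncard_univ, Nat.card_eq_fintype_card, Fintype.card_fin]

lemma feasible_len {n : ℕ} (hn : 2 ≤ n) :
    ∃ w : Fin (n+1) → Fin n ⊕ Fin n,
      IsFeasibleSeq (completeBipartiteGraph (Fin n) (Fin n)) w := by
  have hn0 : 0 < n := by omega
  refine ⟨fun i => if h : (i : ℕ) < n then Sum.inr ⟨i, h⟩ else Sum.inl ⟨0, hn0⟩, ?_, ?_⟩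
  · intro i j hij
    by_cases hi : (i : ℕ) < n <;> by_cases hj : (j : ℕ) < n <;>
      simp_all [Fin.ext_iff] <;> omega
  · intro i
    beta_reduce
    by_cases hi : (i : ℕ) < n
    · -- w i = inr i; the set inl '' {a ≠ 0} avoids all later vertices
      have hsub : Sum.inl '' {a : Fin n | a ≠ ⟨0, hn0⟩} ⊆
          (completeBipartiteGraph (Fin n) (Fin n)).neighborSet
            ((fun i : Fin (n+1) => if h : (i : ℕ) < n then Sum.inr ⟨i, h⟩ else Sum.inl ⟨0, hn0⟩) i)
            \ {v | ∃ j : Fin (n+1), i < j ∧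
              (fun i : Fin (n+1) => if h : (i : ℕ) < n then Sum.inr ⟨i, h⟩ else Sum.inl ⟨0, hn0⟩) j = v} := by
      
        rintro v ⟨a, ha, rfl⟩
        constructor
        · simp [neighborSet, hi]
        · rintro ⟨j, hij, hj⟩
          by_cases hjn : (j : ℕ) < n <;> simp_all [Fin.ext_iff]
      have hcard : ((Sum.inl '' {a : Fin n | a ≠ ⟨0, hn0⟩} : Set (Fin n ⊕ Fin n))).ncard = n - 1 := by
        rw [Set.ncard_image_of_injective _ Sum.inl_injective]
        have : {a : Fin n | a ≠ ⟨0, hn0⟩} = Set.univ \ {⟨0, hn0⟩} := by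
          ext a; simp
        rw [this, Set.ncard_diff_singleton_of_mem (Set.mem_univ _),
          Set.ncard_univ, Nat.card_eq_fintype_card, Fintype.card_fin]
      have := Set.ncard_le_ncard hsub (Set.toFinite _)
      simp only [hcard] at this
      have : (i : ℕ) ≤ n - 1 := by omega
      omega
    · -- last element: i = n, w i = inl 0, no later vertices
      have hin : (i : ℕ) = n := by omega
      have hsub : Set.range (Sum.inr : Fin n → Fin n ⊕ Fin n) ⊆
          (completeBipartiteGraph (Fin n) (Fin n)).neighborSet
            ((fun i : Fin (n+1) => if h : (i : ℕ) < n then Sum.inr ⟨i, h⟩ else Sum.inl ⟨0, hn0⟩) i)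
            \ {v | ∃ j : Fin (n+1), i < j ∧
              (fun i : Fin (n+1) => if h : (i : ℕ) < n then Sum.inr ⟨i, h⟩ else Sum.inl ⟨0, hn0⟩) j = v} := by
        rintro v ⟨b, rfl⟩
        constructor
        · simp [neighborSet, hi]
        · rintro ⟨j, hij, hj⟩
          have : (j : ℕ) < n + 1 := j.isLt
          have : (i : ℕ) < (j : ℕ) := hij
          omega
      have hle := Set.ncard_le_ncard hsub (Set.toFinite _)
      beta_reduce at hle
      have hrn : (Set.range (Sum.inr : Fin n → Fin n ⊕ Fin n)).ncard = n := by
        rw [← Set.image_univ, Set.ncard_image_of_injective _ Sum.inr_injective,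
          Set.ncard_univ, Nat.card_eq_fintype_card, Fintype.card_fin]
      omega

lemma feasible_bound {n : ℕ} (s : ℕ) (w : Fin s → Fin n ⊕ Fin n)
    (h : IsFeasibleSeq (completeBipartiteGraph (Fin n) (Fin n)) w) : s ≤ n + 1 := by
  by_contra hs
  push_neg at hs
  have hs0 : 0 < s := by omega
  obtain ⟨hinj, hdeg⟩ := h
  have := hdeg ⟨s - 1, by omega⟩
  have hle : ((completeBipartiteGraph (Fin n) (Fin n)).neighborSet (w ⟨s - 1, by omega⟩)
      \ {v | ∃ j : Fin s, (⟨s - 1, by omega⟩ : Fin s) < j ∧ w j = v}).ncard ≤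
      ((completeBipartiteGraph (Fin n) (Fin n)).neighborSet (w ⟨s - 1, by omega⟩)).ncard :=
    Set.ncard_le_ncard Set.diff_subset (Set.toFinite _)
  have := nbhd_card_le (w ⟨s - 1, by omega⟩)
  simp only [Fin.val_mk] at *
  omega

/-- For `n ≥ 2`, every partial Grundy coloring of `K_{n,n}` uses exactly 2 colors;
in particular `∂Γ(K_{n,n}) = 2 < s(K_{n,n}) = n + 1`. -/
theorem partialGrundy_completeBipartite (n : ℕ) (hn : 2 ≤ n) :
    (∀ (k : ℕ) (c : Fin n ⊕ Fin n → ℕ),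
        IsPartialGrundy (completeBipartiteGraph (Fin n) (Fin n)) k c → k = 2) ∧
      partialGrundy (completeBipartiteGraph (Fin n) (Fin n)) = 2 ∧
      stairFactor (completeBipartiteGraph (Fin n) (Fin n)) = n + 1 ∧
      partialGrundy (completeBipartiteGraph (Fin n) (Fin n)) <
        stairFactor (completeBipartiteGraph (Fin n) (Fin n)) := by
  have hPG : partialGrundy (completeBipartiteGraph (Fin n) (Fin n)) = 2 := by
    apply le_antisymm
    · exact csSup_le ⟨2, _, grundy_two_mem hn⟩
        (fun k hk => by obtain ⟨c, hc⟩ := hk; exact (key_lemma hn k c hc).le)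
    · exact le_csSup ⟨2, fun k hk => by obtain ⟨c, hc⟩ := hk; exact (key_lemma hn k c hc).le⟩
        ⟨_, grundy_two_mem hn⟩
  have hSF : stairFactor (completeBipartiteGraph (Fin n) (Fin n)) = n + 1 := by
    apply le_antisymm
    · exact csSup_le ⟨n + 1, feasible_len hn⟩
        (fun s hs => by obtain ⟨w, hw⟩ := hs; exact feasible_bound s w hw)
    · exact le_csSup ⟨n + 1, fun s hs => by obtain ⟨w, hw⟩ := hs; exact feasible_bound s w hw⟩
        (feasible_len hn)
  exact ⟨fun k c h => key_lemma hn k c h, hPG, hSF, by omega⟩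
end

section
/- Let G be a graph with girth at least 7, let u be a vertex, and let u_2,...,u_k be distinct neighbors of u. If N_i ⊆ N(u_i) \ {u} with |N_i| = k-2 for each i, then the set T = {u} ∪ {u_2,...,u_k} ∪ N_2 ∪ ... ∪ N_k induces a tree of diameter at most 4 in G, and every vertex outside T has at most one neighbor in T. -/
open SimpleGraph

variable {V : Type*}

open SimpleGraph.Walk

section Aux
variable {G : SimpleGraph V}

private lemma no_small_cycle (hg : (7:ℕ∞) ≤ G.egirth) {a : V} {c : G.Walk a a} (hc : c.IsCycle)
    (hl : c.length ≤ 6) : False := by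
  have h := le_egirth.mp hg a c hc
  have : (7:ℕ) ≤ c.length := by exact_mod_cast h
  omega

private lemma no_tri (hg : (7:ℕ∞) ≤ G.egirth) {a b c : V} (h1 : G.Adj a b) (h2 : G.Adj b c)
    (h3 : G.Adj c a) : False := by
  refine no_small_cycle hg (c := cons h1 (cons h2 (cons h3 nil))) ?_ (by simp)
  simp [Walk.isCycle_def, Walk.isTrail_def, h1.ne, h2.ne, h3.ne, h1.ne', h2.ne', h3.ne',
    Sym2.eq_iff]

private lemma no_quad (hg : (7:ℕ∞) ≤ G.egirth) {a b c d : V} (h1 : G.Adj a b) (h2 : G.Adj b c)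
    (h3 : G.Adj c d) (h4 : G.Adj d a) (hac : a ≠ c) (hbd : b ≠ d) : False := by
  refine no_small_cycle hg (c := cons h1 (cons h2 (cons h3 (cons h4 nil)))) ?_ (by simp)
  simp [Walk.isCycle_def, Walk.isTrail_def, h1.ne, h2.ne, h3.ne, h4.ne, h1.ne', h2.ne',
    h3.ne', h4.ne', hac, hbd, hac.symm, hbd.symm, Sym2.eq_iff]

private lemma no_penta (hg : (7:ℕ∞) ≤ G.egirth) {a b c d e : V} (h1 : G.Adj a b) (h2 : G.Adj b c)
    (h3 : G.Adj c d) (h4 : G.Adj d e) (h5 : G.Adj e a)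
    (hac : a ≠ c) (had : a ≠ d) (hbd : b ≠ d) (hbe : b ≠ e) (hce : c ≠ e) : False := by
  refine no_small_cycle hg (c := cons h1 (cons h2 (cons h3 (cons h4 (cons h5 nil))))) ?_ (by simp)
  simp [Walk.isCycle_def, Walk.isTrail_def, h1.ne, h2.ne, h3.ne, h4.ne, h5.ne, h1.ne', h2.ne',
    h3.ne', h4.ne', h5.ne', hac, had, hbd, hbe, hce, hac.symm, had.symm, hbd.symm, hbe.symm,
    hce.symm, Sym2.eq_iff]

private lemma no_hexa (hg : (7:ℕ∞) ≤ G.egirth) {a b c d e f : V} (h1 : G.Adj a b)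
    (h2 : G.Adj b c) (h3 : G.Adj c d) (h4 : G.Adj d e) (h5 : G.Adj e f) (h6 : G.Adj f a)
    (hac : a ≠ c) (had : a ≠ d) (hae : a ≠ e) (hbd : b ≠ d) (hbe : b ≠ e) (hbf : b ≠ f)
    (hce : c ≠ e) (hcf : c ≠ f) (hdf : d ≠ f) : False := by
  refine no_small_cycle hg
    (c := cons h1 (cons h2 (cons h3 (cons h4 (cons h5 (cons h6 nil)))))) ?_ (by simp)
  simp [Walk.isCycle_def, Walk.isTrail_def, h1.ne, h2.ne, h3.ne, h4.ne, h5.ne, h6.ne, h1.ne',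
    h2.ne', h3.ne', h4.ne', h5.ne', h6.ne', hac, had, hae, hbd, hbe, hbf, hce, hcf, hdf,
    hac.symm, had.symm, hae.symm, hbd.symm, hbe.symm, hbf.symm, hce.symm, hcf.symm, hdf.symm,
    Sym2.eq_iff]

private lemma cycle_two_nbrs {x : V} {c : G.Walk x x} (hc : c.IsCycle) :
    ∃ a b, a ≠ b ∧ G.Adj x a ∧ G.Adj x b ∧ a ∈ c.support ∧ b ∈ c.support := by
  cases c with
  | nil => exact absurd rfl hc.ne_nil
  | @cons _ y _ h q =>
    rw [cons_isCycle_iff] at hc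
    obtain ⟨hq, he⟩ := hc
    have hqn : ¬ q.reverse.Nil := by
      rw [nil_iff_length_eq, length_reverse]
      intro h0
      exact h.ne (q.eq_of_length_eq_zero h0).symm
    obtain ⟨a, h', q', hq'⟩ := not_nil_iff.mp hqn
    refine ⟨y, a, ?_, h, h', by simp, ?_⟩
    · rintro rfl
      apply he
      have : s(x, y) ∈ q.reverse.edges := by rw [hq']; simp
      rwa [edges_reverse, List.mem_reverse] at this
    · have : a ∈ q.reverse.support := by rw [hq']; simp
      rw [support_reverse, List.mem_reverse] at this
      simp [this]

end Aux

/-- Around a vertex `u` with distinct neighbors `w 0, …, w (k-2)`, each `w i` having a set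
`N i` of `k - 2` further neighbors avoiding `u`, the set `T` of all these vertices induces a
tree of diameter at most 4 in a graph of girth at least 7, and every vertex outside `T` has
at most one neighbor in `T`. -/
theorem iris_neighborhood_structure (G : SimpleGraph V) (hg : (7 : ℕ∞) ≤ G.egirth)
    (u : V) (k : ℕ) (hk : 2 ≤ k)
    (w : Fin (k - 1) → V) (hwinj : Function.Injective w) (hadj : ∀ i, G.Adj u (w i))
    (N : Fin (k - 1) → Finset V)
    (hN : ∀ i, ∀ x ∈ N i, G.Adj (w i) x ∧ x ≠ u)
    (hcard : ∀ i, (N i).card = k - 2)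
    (T : Set V) (hT : T = {u} ∪ Set.range w ∪ ⋃ i, (N i : Set V)) :
    (G.induce T).IsTree ∧ (∀ a b : T, (G.induce T).dist a b ≤ 4) ∧
      ∀ x, x ∉ T → ({y | y ∈ T ∧ G.Adj x y}).ncard ≤ 1 := by
  classical
  have hu : u ∈ T := by rw [hT]; exact Or.inl (Or.inl rfl)
  have hwT : ∀ i, w i ∈ T := fun i => by rw [hT]; exact Or.inl (Or.inr ⟨i, rfl⟩)
  have hNT : ∀ i x, x ∈ N i → x ∈ T := fun i x hx => by
    rw [hT]; exact Or.inr (Set.mem_iUnion.mpr ⟨i, hx⟩)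
  have hmem : ∀ a ∈ T, a = u ∨ (∃ i, a = w i) ∨ ∃ i, a ∈ N i := by
    intro a ha
    rw [hT] at ha
    rcases ha with (h | ⟨i, h⟩) | h
    · exact Or.inl h
    · exact Or.inr (Or.inl ⟨i, h.symm⟩)
    · obtain ⟨i, hi⟩ := Set.mem_iUnion.mp h
      exact Or.inr (Or.inr ⟨i, hi⟩)
  -- basic exclusion facts
  have f1 : ∀ i, u ≠ w i := fun i => (hadj i).ne
  have f8 : ∀ i j, ¬ G.Adj (w i) (w j) := fun i j h => no_tri hg (hadj i) h (hadj j).symm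
  have f3 : ∀ i j, w i ∉ N j := fun i j h => f8 j i (hN j _ h).1
  have f5 : ∀ i x, x ∈ N i → ¬ G.Adj u x := fun i x hx h =>
    no_tri hg h (hN i x hx).1.symm (hadj i).symm
  have f4 : ∀ i j x, x ∈ N i → x ∈ N j → i = j := by
    intro i j x hxi hxj
    by_contra hij
    exact no_quad hg (hadj i) (hN i x hxi).1 ((hN j x hxj).1.symm) (hadj j).symm
      ((hN i x hxi).2.symm) (fun h => hij (hwinj h))
  have f6 : ∀ i j x, x ∈ N j → G.Adj (w i) x → i = j := by
    intro i j x hx h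
    by_contra hij
    exact no_quad hg (hadj i) h ((hN j x hx).1.symm) (hadj j).symm
      ((hN j x hx).2.symm) (fun e => hij (hwinj e))
  have f7 : ∀ i j x y, x ∈ N i → y ∈ N j → ¬ G.Adj x y := by
    intro i j x y hx hy hxy
    by_cases hij : i = j
    · subst hij
      exact no_tri hg (hN i x hx).1 hxy ((hN i y hy).1.symm)
    · exact no_penta hg (hadj i) (hN i x hx).1 hxy ((hN j y hy).1.symm) (hadj j).symm
        ((hN i x hx).2.symm) ((hN j y hy).2.symm)
        (fun e => f3 i j (by rw [e]; exact hy))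
        (fun e => hij (hwinj e))
        (fun e => f3 j i (by rw [← e]; exact hx))
  -- adjacency characterization inside T
  have adjT : ∀ a b : V, a ∈ T → b ∈ T → G.Adj a b →
      (a = u ∧ ∃ i, b = w i) ∨ (b = u ∧ ∃ i, a = w i) ∨
      (∃ i, a = w i ∧ b ∈ N i) ∨ (∃ i, b = w i ∧ a ∈ N i) := by
    intro a b haT hbT hab
    rcases hmem a haT with rfl | ⟨i, rfl⟩ | ⟨i, hi⟩ <;>
      rcases hmem b hbT with h | ⟨j, h⟩ | ⟨j, hj⟩
    · exact absurd h.symm hab.ne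
    · exact Or.inl ⟨rfl, j, h⟩
    · exact absurd hab (f5 j b hj)
    · exact Or.inr (Or.inl ⟨h, i, rfl⟩)
    · subst h; exact absurd hab (f8 i j)
    · have := f6 i j b hj hab
      subst this
      exact Or.inr (Or.inr (Or.inl ⟨i, rfl, hj⟩))
    · subst h; exact absurd hab.symm (f5 i a hi)
    · subst h
      have := f6 j i a hi hab.symm
      subst this
      exact Or.inr (Or.inr (Or.inr ⟨j, rfl, hi⟩))
    · exact absurd hab (f7 i j a b hi hj)
  have claimA : ∀ (x : V) (i : Fin (k-1)), x ∈ N i → ∀ b, b ∈ T → G.Adj x b → b = w i := by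
    intro x i hx b hbT hadj'
    rcases adjT x b (hNT i x hx) hbT hadj' with ⟨rfl, -⟩ | ⟨rfl, j, hj⟩ | ⟨j, hj, -⟩ |
      ⟨j, hj, hxj⟩
    · exact absurd rfl (hN _ _ hx).2
    · exact absurd (by rw [hj] at hx; exact hx) (f3 j i)
    · exact absurd (by rw [hj] at hx; exact hx) (f3 j i)
    · rw [hj]
      exact congrArg w (f4 i j x hx hxj).symm
  have claimB : ∀ (i : Fin (k-1)) (b : V), b ∈ T → G.Adj (w i) b →
      (∀ j, b ∉ N j) → b = u := by
    intro i b hbT hadj' hbL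
    rcases adjT (w i) b (hwT i) hbT hadj' with ⟨hwu, -⟩ | ⟨hb, -⟩ | ⟨j, -, hj⟩ | ⟨j, -, hj⟩
    · exact absurd hwu.symm (f1 i)
    · exact hb
    · exact absurd hj (hbL j)
    · exact absurd hj (f3 i j)
  -- no level-2 vertex lies on a cycle of the induced graph
  have hNoL : ∀ (v : T) (c : (G.induce T).Walk v v), c.IsCycle →
      ∀ x ∈ c.support, ∀ i, (x : V) ∉ N i := by
    intro v c hc x hx i hxN
    obtain ⟨a, b, hab, ha, hb, -, -⟩ := cycle_two_nbrs (hc.rotate hx)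
    have ha' : G.Adj (x : V) (a : V) := ha
    have hb' : G.Adj (x : V) (b : V) := hb
    exact hab (Subtype.ext ((claimA x i hxN a a.2 ha').trans
      (claimA x i hxN b b.2 hb').symm))
  have hacyc : (G.induce T).IsAcyclic := by
    intro v c hc
    have hvL := hNoL v c hc v c.start_mem_support
    obtain ⟨a, b, hab, ha, hb, haS, hbS⟩ := cycle_two_nbrs hc
    have hx : ∃ (x : T) (i : Fin (k-1)), x ∈ c.support ∧ (x : V) = w i := by
      rcases hmem (v : V) v.2 with hv | ⟨i, hv⟩ | ⟨i, hv⟩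
      · have haL := hNoL v c hc a haS
        rcases hmem (a : V) a.2 with h1 | ⟨i, h1⟩ | ⟨i, h1⟩
        · have ha' : G.Adj (v : V) (a : V) := ha
          rw [hv, h1] at ha'
          exact absurd ha' (G.irrefl)
        · exact ⟨a, i, haS, h1⟩
        · exact absurd h1 (haL i)
      · exact ⟨v, i, c.start_mem_support, hv⟩
      · exact absurd hv (hvL i)
    obtain ⟨x, i, hxS, hxw⟩ := hx
    obtain ⟨a', b', hab', ha', hb', haS', hbS'⟩ := cycle_two_nbrs (hc.rotate hxS)
    have hL := hNoL x _ (hc.rotate hxS)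
    have key : ∀ (y : T), (G.induce T).Adj x y → y ∈ (c.rotate x hxS).support → (y : V) = u := by
      intro y hy hyS
      have hy' : G.Adj (x : V) (y : V) := hy
      rw [hxw] at hy'
      exact claimB i y y.2 hy' (fun j => hL y hyS j)
    exact hab' (Subtype.ext ((key a' ha' haS').trans (key b' hb' hbS').symm))
  -- short walks to u
  have walkTo : ∀ a : T, ∃ p : (G.induce T).Walk a ⟨u, hu⟩, p.length ≤ 2 := by
    intro a
    rcases hmem (a : V) a.2 with h1 | ⟨i, h1⟩ | ⟨i, h1⟩
    · exact ⟨Walk.nil.copy (Subtype.ext h1).symm rfl, by simp⟩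
    · have h : (G.induce T).Adj a ⟨u, hu⟩ := by
        show G.Adj (a : V) u
        rw [h1]; exact (hadj i).symm
      exact ⟨cons h nil, by simp⟩
    · have h1' : (G.induce T).Adj a ⟨w i, hwT i⟩ := by
        show G.Adj (a : V) (w i)
        exact (hN i a h1).1.symm
      have h2' : (G.induce T).Adj ⟨w i, hwT i⟩ ⟨u, hu⟩ := (hadj i).symm
      exact ⟨cons h1' (cons h2' nil), by simp⟩
  have hconn : (G.induce T).Connected := by
    rw [connected_iff]
    refine ⟨fun a b => ?_, ⟨⟨u, hu⟩⟩⟩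
    obtain ⟨p, -⟩ := walkTo a
    obtain ⟨q, -⟩ := walkTo b
    exact ⟨p.append q.reverse⟩
  refine ⟨⟨hconn, hacyc⟩, ?_, ?_⟩
  · intro a b
    obtain ⟨p, hp⟩ := walkTo a
    obtain ⟨q, hq⟩ := walkTo b
    calc (G.induce T).dist a b ≤ (p.append q.reverse).length := dist_le _
      _ = p.length + q.length := by simp
      _ ≤ 4 := by omega
  · intro x hxT
    have hxu : x ≠ u := fun e => hxT (e ▸ hu)
    have hxw : ∀ i, x ≠ w i := fun i e => hxT (e ▸ hwT i)
    have hsub : {y | y ∈ T ∧ G.Adj x y}.Subsingleton := by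
      rintro y ⟨hyT, hy⟩ z ⟨hzT, hz⟩
      by_contra hyz
      rcases hmem y hyT with rfl | ⟨i, rfl⟩ | ⟨i, hi⟩ <;>
        rcases hmem z hzT with h | ⟨j, h⟩ | ⟨j, hj⟩
      · exact hyz h.symm
      · subst h; exact no_tri hg hy (hadj j) hz.symm
      · exact no_quad hg hy (hadj j) (hN j z hj).1 hz.symm (hxw j) ((hN j z hj).2.symm)
      · subst h; exact no_tri hg hz (hadj i) hy.symm
      · subst h; exact no_quad hg hy (hadj i).symm (hadj j) hz.symm hxu hyz
      · by_cases hij : i = j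
        · subst hij; exact no_tri hg hy (hN i z hj).1 hz.symm
        · exact no_penta hg hy (hadj i).symm (hadj j) (hN j z hj).1 hz.symm
            hxu (hxw j) (fun e => hij (hwinj e))
            (fun e => f3 i j (by rw [e]; exact hj)) ((hN j z hj).2.symm)
      · subst h
        exact no_quad hg hz (hadj i) (hN i y hi).1 hy.symm (hxw i) ((hN i y hi).2.symm)
      · subst h
        by_cases hij : i = j
        · subst hij; exact no_tri hg hz (hN i y hi).1 hy.symm
        · exact no_penta hg hz (hadj j).symm (hadj i) (hN i y hi).1 hy.symm
            hxu (hxw i) (fun e => hij (hwinj e).symm)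
            (fun e => f3 j i (by rw [e]; exact hi)) ((hN i y hi).2.symm)
      · by_cases hij : i = j
        · subst hij
          exact no_quad hg hy (hN i y hi).1.symm (hN i z hj).1 hz.symm (hxw i) hyz
        · exact no_hexa hg hy (hN i y hi).1.symm (hadj i).symm (hadj j) (hN j z hj).1 hz.symm
            (hxw i) hxu (hxw j) ((hN i y hi).2)
            (fun e => f3 j i (by rw [← e]; exact hi)) hyz
            (fun e => hij (hwinj e)) (fun e => f3 i j (by rw [e]; exact hj))
            ((hN j z hj).2.symm)
    rcases hsub.eq_empty_or_singleton with h | ⟨a, h⟩ <;> simp [h]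
end
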